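/- Let a, b : ℕ → Bool be bit sequences and c₋₁ : Bool an incoming carry, and define the carry bits by c_i = (a_i ∧ b_i) ∨ (a_i ∧ c_{i-1}) ∨ (b_i ∧ c_{i-1}) for i ≥ 0. Define p_{i,0} = ⋀_{l=0}^{i} (a_l ⊕ b_l) and g_{i,0} = decide((∑_{l=0}^{i} a_l.toNat · 2^l) + (∑_{l=0}^{i} b_l.toNat · 2^l) ≥ 2^{i+1}). Then for all i ≥ 0, the carry look ahead formula holds: c_i = g_{i,0} ∨ (p_{i,0} ∧ c₋₁). -/
import Mathlib


/-- `rippleCarry a b cin i` is the carry bit `c_{i-1}` of the addition of the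
bit sequences `a` and `b` with incoming carry `cin = c₋₁`, defined by the
recurrence `c_i = (a_i ∧ b_i) ∨ (a_i ∧ c_{i-1}) ∨ (b_i ∧ c_{i-1})` for `i ≥ 0`
and `c₋₁ = cin`. -/
def rippleCarry (a b : ℕ → Bool) (cin : Bool) : ℕ → Bool
  | 0 => cin
  | i + 1 =>
      (a i && b i) || (a i && rippleCarry a b cin i) || (b i && rippleCarry a b cin i)

/-- The propagate bit `p_{j,i} = ⋀_{l=i}^{j} (a_l ⊕ b_l)`. -/
def propagate (a b : ℕ → Bool) (i j : ℕ) : Bool :=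
  decide (∀ l ∈ Finset.Icc i j, xor (a l) (b l) = true)

/-- The generate bit
`g_{j,i} = decide((∑_{l=i}^{j} a_l·2^{l-i}) + (∑_{l=i}^{j} b_l·2^{l-i}) ≥ 2^{j-i+1})`. -/
def generate (a b : ℕ → Bool) (i j : ℕ) : Bool :=
  decide (2 ^ (j - i + 1) ≤
    (∑ l ∈ Finset.Icc i j, (a l).toNat * 2 ^ (l - i)) +
      (∑ l ∈ Finset.Icc i j, (b l).toNat * 2 ^ (l - i)))

lemma icc_zero (n : ℕ) : Finset.Icc 0 n = Finset.range (n+1) := by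
  ext x; simp [Nat.lt_succ_iff]

lemma sum_bound (a : ℕ → Bool) (n : ℕ) :
    (∑ l ∈ Finset.range n, (a l).toNat * 2 ^ l) ≤ 2 ^ n - 1 := by
  calc (∑ l ∈ Finset.range n, (a l).toNat * 2 ^ l)
      ≤ ∑ l ∈ Finset.range n, 2 ^ l := by
        apply Finset.sum_le_sum; intro l _
        cases a l <;> simp
    _ = 2 ^ n - 1 := by
        have := Nat.geomSum_eq (le_refl 2) n
        simpa using this

lemma propagate_succ (a b : ℕ → Bool) (i : ℕ) :
    propagate a b 0 (i + 1) = (propagate a b 0 i && xor (a (i+1)) (b (i+1))) := by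
  simp only [propagate, icc_zero]
  rw [show (i + 1 + 1) = (i + 1) + 1 from rfl, Finset.range_add_one]
  cases h : xor (a (i+1)) (b (i+1)) <;>
    simp [Finset.forall_mem_insert, h] <;>
    cases h1 : a (i+1) <;> cases h2 : b (i+1) <;> simp_all

lemma generate_succ (a b : ℕ → Bool) (i : ℕ) :
    generate a b 0 (i + 1) =
      ((a (i+1) && b (i+1)) || (xor (a (i+1)) (b (i+1)) && generate a b 0 i)) := by
  simp only [generate, icc_zero, Nat.sub_zero]
  rw [Finset.sum_range_succ (fun l => (a l).toNat * 2^l) (i+1),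
      Finset.sum_range_succ (fun l => (b l).toNat * 2^l) (i+1)]
  have ha := sum_bound a (i+1)
  have hb := sum_bound b (i+1)
  have hpos : (1:ℕ) ≤ 2 ^ (i+1) := Nat.one_le_two_pow
  have hp : 2 ^ (i + 1 + 1) = 2 ^ (i+1) + 2 ^ (i+1) := by ring
  set A := ∑ l ∈ Finset.range (i+1), (a l).toNat * 2 ^ l with hA
  set B := ∑ l ∈ Finset.range (i+1), (b l).toNat * 2 ^ l with hB
  clear_value A B
  cases ha' : a (i+1) <;> cases hb' : b (i+1) <;>
    simp only [Bool.toNat_true, Bool.toNat_false, Bool.true_and, Bool.false_and,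
      Bool.and_true, Bool.and_false, Bool.true_or, Bool.false_or, Bool.xor_false,
      Bool.xor_true, Bool.true_xor, Bool.false_xor, Bool.not_true, Bool.not_false,
      Bool.or_false, Bool.or_true, Nat.zero_mul, Nat.one_mul, Nat.add_zero] <;>
    simp only [decide_eq_decide, decide_eq_true_eq, decide_eq_false_iff_not] <;>
    omega

/-- **Carry look ahead formula.** For all `i ≥ 0`, the carry bit `c_i` of the
addition of `a`, `b` with incoming carry `c₋₁` satisfies
`c_i = g_{i,0} ∨ (p_{i,0} ∧ c₋₁)`. -/
theorem carry_look_ahead (a b : ℕ → Bool) (cin : Bool) (i : ℕ) :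
    rippleCarry a b cin (i + 1) =
      (generate a b 0 i || (propagate a b 0 i && cin)) := by
  induction i with
  | zero =>
      simp only [rippleCarry, generate, propagate]
      cases h1 : a 0 <;> cases h2 : b 0 <;> cases cin <;>
        simp [Finset.Icc_self, h1, h2]
  | succ n ih =>
      rw [show rippleCarry a b cin (n+2) =
        ((a (n+1) && b (n+1)) || (a (n+1) && rippleCarry a b cin (n+1))
          || (b (n+1) && rippleCarry a b cin (n+1))) from rfl,
        ih, generate_succ, propagate_succ]
      cases a (n+1) <;> cases b (n+1) <;> cases generate a b 0 n <;>
        cases propagate a b 0 n <;> cases cin <;> rfl
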